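/- arXiv:1809.07011 — 9 statements merged into one kernel-verified Lean document; each statement's English description precedes it below -/
import Mathlib

section
/- Let π, π' ∈ (0,1), let a, b ≥ 0 with a + b > 0, and set p_u = π·a + (1−π)·b and p_t = π'·a + (1−π')·b. If α = (π − π·π')/(π' + π − 2·π·π'), then sign(π·a/p_u − α) = sign(π'·a/p_t − 1/2). -/
lemma sign_mul_pos_left (c x : ℝ) (hc : 0 < c) :
    Real.sign (c * x) = Real.sign x := by
  rcases lt_trichotomy x 0 with h | h | h
  · rw [Real.sign_of_neg h, Real.sign_of_neg (mul_neg_of_pos_of_neg hc h)]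
  · simp [h]
  · rw [Real.sign_of_pos h, Real.sign_of_pos (mul_pos hc h)]

theorem stmt_0 (π π' a b pu pt α : ℝ)
    (hπ : π ∈ Set.Ioo (0:ℝ) 1) (hπ' : π' ∈ Set.Ioo (0:ℝ) 1)
    (ha : 0 ≤ a) (hb : 0 ≤ b) (hab : 0 < a + b)
    (hpu : pu = π * a + (1 - π) * b) (hpt : pt = π' * a + (1 - π') * b)
    (hα : α = (π - π * π') / (π' + π - 2 * π * π')) :
    Real.sign (π * a / pu - α) = Real.sign (π' * a / pt - 1 / 2) := by
  obtain ⟨hπ0, hπ1⟩ := hπ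
  obtain ⟨hπ'0, hπ'1⟩ := hπ'
  have hD : 0 < π' + π - 2 * π * π' := by nlinarith
  have hpu0 : 0 < pu := by
    rw [hpu]
    rcases lt_or_ge 0 a with h | h
    · nlinarith
    · have : a = 0 := le_antisymm h ha
      nlinarith
  have hpt0 : 0 < pt := by
    rw [hpt]
    rcases lt_or_ge 0 a with h | h
    · nlinarith
    · have : a = 0 := le_antisymm h ha
      nlinarith
  have key1 : π * a / pu - α =
      (π * (1 - π) / (pu * (π' + π - 2 * π * π'))) * (π' * a - (1 - π') * b) := by
    have hpun : pu ≠ 0 := ne_of_gt hpu0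
    have hDn : (π' + π - 2 * π * π') ≠ 0 := ne_of_gt hD
    rw [hα]
    rw [div_sub_div _ _ hpun hDn, div_mul_eq_mul_div]
    rw [div_eq_div_iff (mul_ne_zero hpun hDn) (mul_ne_zero hpun hDn)]
    subst hpu
    ring
  have key2 : π' * a / pt - 1 / 2 = (1 / (2 * pt)) * (π' * a - (1 - π') * b) := by
    have hptn : pt ≠ 0 := ne_of_gt hpt0
    field_simp
    subst hpt
    ring
  rw [key1, key2,
    sign_mul_pos_left _ _ (div_pos (mul_pos hπ0 (by linarith)) (mul_pos hpu0 hD)),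
    sign_mul_pos_left _ _ (div_pos one_pos (by linarith))]
end

section
/- Let π, α ∈ (0,1), let a, b ≥ 0 with a + b > 0, set π' = (π − α·π)/(π + α − 2·α·π), p_u = π·a + (1−π)·b, and p_t = π'·a + (1−π')·b. Then sign(π·a/p_u − α) = sign(π'·a/p_t − 1/2). -/
theorem stmt_1 (π α a b π' pu pt : ℝ)
    (hπ : π ∈ Set.Ioo (0:ℝ) 1) (hα : α ∈ Set.Ioo (0:ℝ) 1)
    (ha : 0 ≤ a) (hb : 0 ≤ b) (hab : 0 < a + b)
    (hπ' : π' = (π - α * π) / (π + α - 2 * α * π))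
    (hpu : pu = π * a + (1 - π) * b) (hpt : pt = π' * a + (1 - π') * b) :
    Real.sign (π * a / pu - α) = Real.sign (π' * a / pt - 1 / 2) := by
  obtain ⟨hπ0, hπ1⟩ := hπ
  obtain ⟨hα0, hα1⟩ := hα
  set D : ℝ := π + α - 2 * α * π with hD
  have hDpos : 0 < D := by
    have : D = π * (1 - α) + α * (1 - π) := by ring
    nlinarith
  have hπ'0 : 0 < π' := by
    rw [hπ']
    apply div_pos _ hDpos
    nlinarith
  have hπ'1 : π' < 1 := by
    rw [hπ', div_lt_one hDpos]
    nlinarith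
  have hpu0 : 0 < pu := by
    rw [hpu]
    rcases lt_or_ge 0 a with h | h
    · nlinarith
    · have ha0 : a = 0 := le_antisymm h ha
      nlinarith
  have hpt0 : 0 < pt := by
    rw [hpt]
    rcases lt_or_ge 0 a with h | h
    · nlinarith
    · have ha0 : a = 0 := le_antisymm h ha
      nlinarith
  set E : ℝ := π * (1 - α) * a - α * (1 - π) * b with hE
  have h1 : π * a / pu - α = E / pu := by
    rw [hpu] at hpu0 ⊢
    field_simp
    ring
  have h2 : π' * a / pt - 1 / 2 = E / (D * (2 * pt)) := by
    have h1π' : 1 - π' = α * (1 - π) / D := by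
      rw [hπ']; field_simp; ring
    have hπ'v : π' = π * (1 - α) / D := by
      rw [hπ']; field_simp
    rw [hpt, h1π', hπ'v] at hpt0 ⊢
    rw [div_sub_div _ _ (ne_of_gt (by positivity : (0:ℝ) < π * (1 - α) / D * a + α * (1 - π) / D * b)) two_ne_zero]
    field_simp
    ring
  rw [h1, h2]
  rcases lt_trichotomy E 0 with hlt | heq | hgt
  · rw [Real.sign_of_neg (div_neg_of_neg_of_pos hlt hpu0),
      Real.sign_of_neg (div_neg_of_neg_of_pos hlt (by positivity))]
  · rw [heq]; simp
  · rw [Real.sign_of_pos (div_pos hgt hpu0),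
      Real.sign_of_pos (div_pos hgt (by positivity))]
end

section
/- Let π' , α ∈ (0,1), let a, b ≥ 0 with a + b > 0, set π_unif = (π' − α·π')/(π' + α − 2·α·π'), p_t = π'·a + (1−π')·b, and q = π_unif·a + (1−π_unif)·b. Then sign(π'·a/p_t − α) = sign(π_unif·a/q − 1/2). -/
lemma mix_pos (c a b : ℝ) (hc0 : 0 < c) (hc1 : c < 1) (ha : 0 ≤ a) (hb : 0 ≤ b)
    (hab : 0 < a + b) : 0 < c * a + (1 - c) * b := by
  rcases ha.lt_or_eq with h | h
  · nlinarith [mul_pos hc0 h, mul_nonneg (by linarith : (0:ℝ) ≤ 1 - c) hb]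
  · have hb' : 0 < b := by linarith
    nlinarith [mul_pos (by linarith : (0:ℝ) < 1 - c) hb', mul_nonneg hc0.le ha]

theorem stmt_2 (π' α a b πunif pt q : ℝ)
    (hπ' : π' ∈ Set.Ioo (0:ℝ) 1) (hα : α ∈ Set.Ioo (0:ℝ) 1)
    (ha : 0 ≤ a) (hb : 0 ≤ b) (hab : 0 < a + b)
    (hunif : πunif = (π' - α * π') / (π' + α - 2 * α * π'))
    (hpt : pt = π' * a + (1 - π') * b) (hq : q = πunif * a + (1 - πunif) * b) :
    Real.sign (π' * a / pt - α) = Real.sign (πunif * a / q - 1 / 2) := by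
  obtain ⟨hπ0, hπ1⟩ := hπ'
  obtain ⟨hα0, hα1⟩ := hα
  have hD : 0 < π' + α - 2 * α * π' := by nlinarith
  have hu0 : 0 < πunif := by
    rw [hunif]; apply div_pos; nlinarith; exact hD
  have hu1 : πunif < 1 := by
    rw [hunif]; rw [div_lt_one hD]; nlinarith
  have hpt0 : 0 < pt := hpt ▸ mix_pos π' a b hπ0 hπ1 ha hb hab
  have hq0 : 0 < q := hq ▸ mix_pos πunif a b hu0 hu1 ha hb hab
  set N : ℝ := π' * (1 - α) * a - α * (1 - π') * b with hN
  have h1 : π' * a / pt - α = N / pt := by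
    field_simp
    rw [hpt]; ring
  have hM : (πunif * a - (1 - πunif) * b) * (π' + α - 2 * α * π') = N := by
    rw [hunif, hN]
    have key : (π' - α * π') / (π' + α - 2 * α * π') * (π' + α - 2 * α * π') = π' - α * π' :=
      div_mul_cancel₀ _ hD.ne'
    linear_combination (a + b) * key
  have e1 : πunif * a / q - 1 / 2 = (2 * (πunif * a) - q) / (2 * q) := by
    field_simp
  have e2 : 2 * (πunif * a) - q = πunif * a - (1 - πunif) * b := by rw [hq]; ring
  have e3 : πunif * a - (1 - πunif) * b = N / (π' + α - 2 * α * π') :=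
    (eq_div_iff hD.ne').mpr hM
  have h2 : πunif * a / q - 1 / 2 = N / (2 * q * (π' + α - 2 * α * π')) := by
    rw [e1, e2, e3, div_div, mul_comm (π' + α - 2 * α * π') (2 * q)]
  rw [h1, h2]
  have h2q : 0 < 2 * q * (π' + α - 2 * α * π') := by positivity
  rcases lt_trichotomy N 0 with h | h | h
  · rw [Real.sign_of_neg (div_neg_of_neg_of_pos h hpt0),
      Real.sign_of_neg (div_neg_of_neg_of_pos h h2q)]
  · rw [h, zero_div, zero_div]
  · rw [Real.sign_of_pos (div_pos h hpt0), Real.sign_of_pos (div_pos h h2q)]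
end

section
/- Let μ_p and μ_n be probability measures on a measurable space X, let π, π' ∈ (0,1), and let μ_u = π·μ_p + (1−π)·μ_n. Let g : X → ℝ and ℓ : ℝ → ℝ be such that x ↦ ℓ(g x) and x ↦ ℓ(−g x) are integrable with respect to both μ_p and μ_n. Then π'·∫ ℓ(g x) dμ_p + (1−π')·∫ ℓ(−g x) dμ_n = ∫ (π'·ℓ(g x) − ((π − π·π')/(1−π))·ℓ(−g x)) dμ_p + ((1−π')/(1−π))·∫ ℓ(−g x) dμ_u. -/
open MeasureTheory

theorem stmt_4 {X : Type*} [MeasurableSpace X]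
    (μp μn : Measure X) [IsProbabilityMeasure μp] [IsProbabilityMeasure μn]
    (π π' : ℝ) (hπ : π ∈ Set.Ioo (0:ℝ) 1) (hπ' : π' ∈ Set.Ioo (0:ℝ) 1)
    (μu : Measure X) (hμu : μu = ENNReal.ofReal π • μp + ENNReal.ofReal (1 - π) • μn)
    (g : X → ℝ) (ℓ : ℝ → ℝ)
    (h1p : Integrable (fun x => ℓ (g x)) μp) (h1n : Integrable (fun x => ℓ (g x)) μn)
    (h2p : Integrable (fun x => ℓ (-g x)) μp) (h2n : Integrable (fun x => ℓ (-g x)) μn) :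
    π' * ∫ x, ℓ (g x) ∂μp + (1 - π') * ∫ x, ℓ (-g x) ∂μn
      = ∫ x, (π' * ℓ (g x) - (π - π * π') / (1 - π) * ℓ (-g x)) ∂μp
        + (1 - π') / (1 - π) * ∫ x, ℓ (-g x) ∂μu := by
  obtain ⟨hπ0, hπ1⟩ := hπ
  have h1 : (1 : ℝ) - π ≠ 0 := by linarith
  have hu : ∫ x, ℓ (-g x) ∂μu
      = π * ∫ x, ℓ (-g x) ∂μp + (1 - π) * ∫ x, ℓ (-g x) ∂μn := by
    rw [hμu, integral_add_measure (h2p.smul_measure ENNReal.ofReal_lt_top.ne)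
      (h2n.smul_measure ENNReal.ofReal_lt_top.ne), integral_smul_measure,
      integral_smul_measure, ENNReal.toReal_ofReal hπ0.le,
      ENNReal.toReal_ofReal (by linarith : (0:ℝ) ≤ 1 - π), smul_eq_mul, smul_eq_mul]
  have hp : ∫ x, (π' * ℓ (g x) - (π - π * π') / (1 - π) * ℓ (-g x)) ∂μp
      = π' * ∫ x, ℓ (g x) ∂μp - (π - π * π') / (1 - π) * ∫ x, ℓ (-g x) ∂μp := by
    rw [integral_sub (h1p.const_mul _) (h2p.const_mul _), integral_const_mul, integral_const_mul]
  rw [hu, hp]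
  field_simp
  ring
end

section
/- Let E be a real inner product space, X a measurable space, φ : X → E, and for θ ∈ E define g_θ(x) = ⟪θ, φ x⟫. Let ℓ : ℝ → ℝ be convex with ℓ(z) − ℓ(−z) = −z for all z ∈ ℝ. Let μ_p be a probability measure and μ_u a finite measure on X such that for every θ ∈ E the maps x ↦ ℓ(g_θ x), x ↦ ℓ(−g_θ x), and x ↦ ⟪θ, φ x⟫ are integrable with respect to μ_p and μ_u. If π, π' ∈ (0,1) with π ≤ π', then the function θ ↦ ∫ (π'·ℓ(g_θ x) − ((π − π·π')/(1−π))·ℓ(−g_θ x)) dμ_p + ((1−π')/(1−π))·∫ ℓ(−g_θ x) dμ_u is convex on E. -/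
open MeasureTheory

lemma aux_conv_int {E : Type*} [NormedAddCommGroup E] [InnerProductSpace ℝ E]
    {X : Type*} [MeasurableSpace X] (φ : X → E)
    (ℓ : ℝ → ℝ) (hℓconv : ConvexOn ℝ Set.univ ℓ)
    (μ : Measure X)
    (hint : ∀ θ : E, Integrable (fun x => ℓ (inner ℝ θ (φ x) : ℝ)) μ) :
    ConvexOn ℝ Set.univ (fun θ : E => ∫ x, ℓ (inner ℝ θ (φ x) : ℝ) ∂μ) := by
  refine ⟨convex_univ, fun θ₁ _ θ₂ _ a b ha hb hab => ?_⟩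
  have h1 : ∀ x, ℓ (inner ℝ (a • θ₁ + b • θ₂) (φ x) : ℝ)
      ≤ a * ℓ (inner ℝ θ₁ (φ x) : ℝ) + b * ℓ (inner ℝ θ₂ (φ x) : ℝ) := by
    intro x
    have := hℓconv.2 (Set.mem_univ (inner ℝ θ₁ (φ x) : ℝ))
      (Set.mem_univ (inner ℝ θ₂ (φ x) : ℝ)) ha hb hab
    simpa [inner_add_left, real_inner_smul_left, smul_eq_mul] using this
  calc ∫ x, ℓ (inner ℝ (a • θ₁ + b • θ₂) (φ x) : ℝ) ∂μ
      ≤ ∫ x, (a * ℓ (inner ℝ θ₁ (φ x) : ℝ) + b * ℓ (inner ℝ θ₂ (φ x) : ℝ)) ∂μ :=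
        integral_mono (hint _) (((hint θ₁).const_mul a).add ((hint θ₂).const_mul b)) h1
    _ = a • ∫ x, ℓ (inner ℝ θ₁ (φ x) : ℝ) ∂μ + b • ∫ x, ℓ (inner ℝ θ₂ (φ x) : ℝ) ∂μ := by
        rw [integral_add ((hint θ₁).const_mul a) ((hint θ₂).const_mul b),
          integral_const_mul, integral_const_mul]
        simp [smul_eq_mul]

theorem stmt_5 {E : Type*} [NormedAddCommGroup E] [InnerProductSpace ℝ E]
    {X : Type*} [MeasurableSpace X] (φ : X → E)
    (ℓ : ℝ → ℝ) (hℓconv : ConvexOn ℝ Set.univ ℓ)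
    (hℓodd : ∀ z : ℝ, ℓ z - ℓ (-z) = -z)
    (μp μu : Measure X) [IsProbabilityMeasure μp] [IsFiniteMeasure μu]
    (hint1p : ∀ θ : E, Integrable (fun x => ℓ (inner ℝ θ (φ x) : ℝ)) μp)
    (hint1u : ∀ θ : E, Integrable (fun x => ℓ (inner ℝ θ (φ x) : ℝ)) μu)
    (hint2p : ∀ θ : E, Integrable (fun x => ℓ (-(inner ℝ θ (φ x) : ℝ))) μp)
    (hint2u : ∀ θ : E, Integrable (fun x => ℓ (-(inner ℝ θ (φ x) : ℝ))) μu)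
    (hint3p : ∀ θ : E, Integrable (fun x => (inner ℝ θ (φ x) : ℝ)) μp)
    (hint3u : ∀ θ : E, Integrable (fun x => (inner ℝ θ (φ x) : ℝ)) μu)
    (π π' : ℝ) (hπ : π ∈ Set.Ioo (0:ℝ) 1) (hπ' : π' ∈ Set.Ioo (0:ℝ) 1)
    (hππ' : π ≤ π') :
    ConvexOn ℝ Set.univ (fun θ : E =>
      (∫ x, (π' * ℓ (inner ℝ θ (φ x) : ℝ)
          - (π - π * π') / (1 - π) * ℓ (-(inner ℝ θ (φ x) : ℝ))) ∂μp)
        + (1 - π') / (1 - π) * ∫ x, ℓ (-(inner ℝ θ (φ x) : ℝ)) ∂μu) := by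
  obtain ⟨hπ0, hπ1⟩ := hπ
  obtain ⟨hπ'0, hπ'1⟩ := hπ'
  have h1π : (0:ℝ) < 1 - π := by linarith
  set c : ℝ := (π - π * π') / (1 - π) with hc
  set aa : ℝ := (π' - π) / (1 - π) with haa
  set bb : ℝ := (1 - π') / (1 - π) with hbb
  have hc0 : 0 ≤ c := by
    apply div_nonneg _ h1π.le
    nlinarith
  have haa0 : 0 ≤ aa := div_nonneg (by linarith) h1π.le
  have hbb0 : 0 ≤ bb := div_nonneg (by linarith) h1π.le
  have hodd : ∀ z : ℝ, ℓ (-z) = ℓ z + z := by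
    intro z; have := hℓodd z; linarith
  -- rewrite the function
  have key : (fun θ : E =>
      (∫ x, (π' * ℓ (inner ℝ θ (φ x) : ℝ)
          - (π - π * π') / (1 - π) * ℓ (-(inner ℝ θ (φ x) : ℝ))) ∂μp)
        + (1 - π') / (1 - π) * ∫ x, ℓ (-(inner ℝ θ (φ x) : ℝ)) ∂μu)
      = (fun θ : E =>
        (aa * ∫ x, ℓ (inner ℝ θ (φ x) : ℝ) ∂μp
          + (-c) * ∫ x, (inner ℝ θ (φ x) : ℝ) ∂μp)
        + bb * ∫ x, ℓ (-(inner ℝ θ (φ x) : ℝ)) ∂μu) := by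
    funext θ
    have h2 : ∫ x, ℓ (-(inner ℝ θ (φ x) : ℝ)) ∂μp
        = ∫ x, ℓ (inner ℝ θ (φ x) : ℝ) ∂μp + ∫ x, (inner ℝ θ (φ x) : ℝ) ∂μp := by
      rw [← integral_add (hint1p θ) (hint3p θ)]
      exact integral_congr_ae (Filter.Eventually.of_forall fun x => hodd _)
    have h3 : ∫ x, (π' * ℓ (inner ℝ θ (φ x) : ℝ)
          - (π - π * π') / (1 - π) * ℓ (-(inner ℝ θ (φ x) : ℝ))) ∂μp
        = π' * ∫ x, ℓ (inner ℝ θ (φ x) : ℝ) ∂μp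
          - c * ∫ x, ℓ (-(inner ℝ θ (φ x) : ℝ)) ∂μp := by
      rw [integral_sub ((hint1p θ).const_mul _) ((hint2p θ).const_mul _),
        integral_const_mul, integral_const_mul]
    rw [h3, h2]
    have haac : aa = π' - c := by
      rw [haa, hc, eq_sub_iff_add_eq, ← add_div, div_eq_iff h1π.ne']
      ring
    rw [haac]
    ring
  rw [key]
  have conv1 : ConvexOn ℝ Set.univ
      (fun θ : E => ∫ x, ℓ (inner ℝ θ (φ x) : ℝ) ∂μp) :=
    aux_conv_int φ ℓ hℓconv μp hint1p
  have conv2 : ConvexOn ℝ Set.univ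
      (fun θ : E => ∫ x, ℓ (-(inner ℝ θ (φ x) : ℝ)) ∂μu) := by
    have := aux_conv_int (fun x => -φ x) ℓ hℓconv μu
      (fun θ => by simpa [inner_neg_right] using hint2u θ)
    simpa [inner_neg_right] using this
  have convlin : ConvexOn ℝ Set.univ
      (fun θ : E => (-c) * ∫ x, (inner ℝ θ (φ x) : ℝ) ∂μp) := by
    refine ⟨convex_univ, fun θ₁ _ θ₂ _ a b ha hb hab => le_of_eq ?_⟩
    have hint' : ∫ x, (inner ℝ (a • θ₁ + b • θ₂) (φ x) : ℝ) ∂μp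
        = a * ∫ x, (inner ℝ θ₁ (φ x) : ℝ) ∂μp + b * ∫ x, (inner ℝ θ₂ (φ x) : ℝ) ∂μp := by
      rw [← integral_const_mul, ← integral_const_mul,
        ← integral_add ((hint3p θ₁).const_mul a) ((hint3p θ₂).const_mul b)]
      exact integral_congr_ae (Filter.Eventually.of_forall fun x => by
        simp [inner_add_left, real_inner_smul_left])
    simp only [hint', smul_eq_mul]
    ring
  have h1 : ConvexOn ℝ Set.univ
      (fun θ : E => aa * ∫ x, ℓ (inner ℝ θ (φ x) : ℝ) ∂μp) := by
    simpa [smul_eq_mul] using conv1.smul haa0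
  have h2 : ConvexOn ℝ Set.univ
      (fun θ : E => bb * ∫ x, ℓ (-(inner ℝ θ (φ x) : ℝ)) ∂μu) := by
    simpa [smul_eq_mul] using conv2.smul hbb0
  exact (h1.add convlin).add h2
end

section
/- Let μ_p and μ_n be probability measures on a measurable space X, let π ∈ (0,1), α ∈ (0,1), and let μ_u = π·μ_p + (1−π)·μ_n. Let g : X → ℝ and ℓ : ℝ → ℝ be such that x ↦ ℓ(g x) and x ↦ ℓ(−g x) are integrable with respect to both μ_p and μ_n. Then π·(1−α)·∫ ℓ(g x) dμ_p + (1−π)·α·∫ ℓ(−g x) dμ_n = π·∫ ((1−α)·ℓ(g x) − α·ℓ(−g x)) dμ_p + α·∫ ℓ(−g x) dμ_u. -/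
open MeasureTheory

theorem stmt_6 {X : Type*} [MeasurableSpace X]
    (μp μn : Measure X) [IsProbabilityMeasure μp] [IsProbabilityMeasure μn]
    (π α : ℝ) (hπ : π ∈ Set.Ioo (0:ℝ) 1) (hα : α ∈ Set.Ioo (0:ℝ) 1)
    (μu : Measure X) (hμu : μu = ENNReal.ofReal π • μp + ENNReal.ofReal (1 - π) • μn)
    (g : X → ℝ) (ℓ : ℝ → ℝ)
    (h1p : Integrable (fun x => ℓ (g x)) μp) (h1n : Integrable (fun x => ℓ (g x)) μn)
    (h2p : Integrable (fun x => ℓ (-g x)) μp) (h2n : Integrable (fun x => ℓ (-g x)) μn) :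
    π * (1 - α) * ∫ x, ℓ (g x) ∂μp + (1 - π) * α * ∫ x, ℓ (-g x) ∂μn
      = π * ∫ x, ((1 - α) * ℓ (g x) - α * ℓ (-g x)) ∂μp
        + α * ∫ x, ℓ (-g x) ∂μu := by
  have hpi : (0:ℝ) ≤ π := hπ.1.le
  have hpi' : (0:ℝ) ≤ 1 - π := by linarith [hπ.2]
  have hu : ∫ x, ℓ (-g x) ∂μu
      = π * ∫ x, ℓ (-g x) ∂μp + (1 - π) * ∫ x, ℓ (-g x) ∂μn := by
    rw [hμu, integral_add_measure, integral_smul_measure, integral_smul_measure,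
      ENNReal.toReal_ofReal hpi, ENNReal.toReal_ofReal hpi']
    · rfl
    · exact h2p.smul_measure ENNReal.ofReal_lt_top.ne
    · exact h2n.smul_measure ENNReal.ofReal_lt_top.ne
  have hs : ∫ x, ((1 - α) * ℓ (g x) - α * ℓ (-g x)) ∂μp
      = (1 - α) * ∫ x, ℓ (g x) ∂μp - α * ∫ x, ℓ (-g x) ∂μp := by
    rw [integral_sub (h1p.const_mul _) (h2p.const_mul _), integral_const_mul, integral_const_mul]
  rw [hu, hs]; ring
end

section
/- Let E be a real inner product space, X a measurable space, φ : X → E, and for θ ∈ E define g_θ(x) = ⟪θ, φ x⟫. Let ℓ : ℝ → ℝ be convex with ℓ(z) − ℓ(−z) = −z for all z ∈ ℝ. Let μ_p be a probability measure and μ_u a finite measure on X such that for every θ ∈ E the maps x ↦ ℓ(g_θ x), x ↦ ℓ(−g_θ x), and x ↦ ⟪θ, φ x⟫ are integrable with respect to μ_p and μ_u. If π ∈ (0,1) and 0 < α ≤ 1/2, then the function θ ↦ π·∫ ((1−α)·ℓ(g_θ x) − α·ℓ(−g_θ x)) dμ_p + α·∫ ℓ(−g_θ x) dμ_u is convex on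 E. -/
open MeasureTheory

/-- Convexity of θ ↦ ∫ ℓ(⟪θ, ψ x⟫) dμ for a convex ℓ. -/
lemma aux_convexOn_integral {E : Type*} [NormedAddCommGroup E] [InnerProductSpace ℝ E]
    {X : Type*} [MeasurableSpace X] (ψ : X → E)
    (ℓ : ℝ → ℝ) (hℓconv : ConvexOn ℝ Set.univ ℓ)
    (μ : Measure X)
    (hint : ∀ θ : E, Integrable (fun x => ℓ (inner ℝ θ (ψ x) : ℝ)) μ) :
    ConvexOn ℝ Set.univ (fun θ : E => ∫ x, ℓ (inner ℝ θ (ψ x) : ℝ) ∂μ) := by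
  refine ⟨convex_univ, fun θ₁ _ θ₂ _ a b ha hb hab => ?_⟩
  have h1 : ∫ x, ℓ (inner ℝ (a • θ₁ + b • θ₂) (ψ x) : ℝ) ∂μ
      ≤ ∫ x, (a * ℓ (inner ℝ θ₁ (ψ x) : ℝ) + b * ℓ (inner ℝ θ₂ (ψ x) : ℝ)) ∂μ := by
    refine integral_mono (hint _) (((hint θ₁).const_mul a).add ((hint θ₂).const_mul b))
      (fun x => ?_)
    have := hℓconv.2 (Set.mem_univ (inner ℝ θ₁ (ψ x) : ℝ)) (Set.mem_univ (inner ℝ θ₂ (ψ x) : ℝ))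
      ha hb hab
    simpa [inner_add_left, real_inner_smul_left, smul_eq_mul] using this
  calc ∫ x, ℓ (inner ℝ (a • θ₁ + b • θ₂) (ψ x) : ℝ) ∂μ
      ≤ ∫ x, (a * ℓ (inner ℝ θ₁ (ψ x) : ℝ) + b * ℓ (inner ℝ θ₂ (ψ x) : ℝ)) ∂μ := h1
    _ = a • ∫ x, ℓ (inner ℝ θ₁ (ψ x) : ℝ) ∂μ + b • ∫ x, ℓ (inner ℝ θ₂ (ψ x) : ℝ) ∂μ := by
        rw [integral_add ((hint θ₁).const_mul a) ((hint θ₂).const_mul b),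
          integral_const_mul, integral_const_mul]
        simp [smul_eq_mul]

/-- θ ↦ c * ∫ ⟪θ, φ x⟫ dμ is convex (it is linear). -/
lemma aux_convexOn_linear {E : Type*} [NormedAddCommGroup E] [InnerProductSpace ℝ E]
    {X : Type*} [MeasurableSpace X] (φ : X → E) (c : ℝ) (μ : Measure X)
    (hint : ∀ θ : E, Integrable (fun x => (inner ℝ θ (φ x) : ℝ)) μ) :
    ConvexOn ℝ Set.univ (fun θ : E => c * ∫ x, (inner ℝ θ (φ x) : ℝ) ∂μ) := by
  refine ⟨convex_univ, fun θ₁ _ θ₂ _ a b ha hb hab => le_of_eq ?_⟩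
  have h : ∫ x, (inner ℝ (a • θ₁ + b • θ₂) (φ x) : ℝ) ∂μ
      = a * ∫ x, (inner ℝ θ₁ (φ x) : ℝ) ∂μ + b * ∫ x, (inner ℝ θ₂ (φ x) : ℝ) ∂μ := by
    rw [← integral_const_mul, ← integral_const_mul,
      ← integral_add ((hint θ₁).const_mul a) ((hint θ₂).const_mul b)]
    congr 1
    ext x
    simp [inner_add_left, real_inner_smul_left]
  simp only [h, smul_eq_mul]
  ring

theorem stmt_7 {E : Type*} [NormedAddCommGroup E] [InnerProductSpace ℝ E]
    {X : Type*} [MeasurableSpace X] (φ : X → E)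
    (ℓ : ℝ → ℝ) (hℓconv : ConvexOn ℝ Set.univ ℓ)
    (hℓodd : ∀ z : ℝ, ℓ z - ℓ (-z) = -z)
    (μp μu : Measure X) [IsProbabilityMeasure μp] [IsFiniteMeasure μu]
    (hint1p : ∀ θ : E, Integrable (fun x => ℓ (inner ℝ θ (φ x) : ℝ)) μp)
    (hint1u : ∀ θ : E, Integrable (fun x => ℓ (inner ℝ θ (φ x) : ℝ)) μu)
    (hint2p : ∀ θ : E, Integrable (fun x => ℓ (-(inner ℝ θ (φ x) : ℝ))) μp)
    (hint2u : ∀ θ : E, Integrable (fun x => ℓ (-(inner ℝ θ (φ x) : ℝ))) μu)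
    (hint3p : ∀ θ : E, Integrable (fun x => (inner ℝ θ (φ x) : ℝ)) μp)
    (hint3u : ∀ θ : E, Integrable (fun x => (inner ℝ θ (φ x) : ℝ)) μu)
    (π α : ℝ) (hπ : π ∈ Set.Ioo (0:ℝ) 1) (hα1 : 0 < α) (hα2 : α ≤ 1 / 2) :
    ConvexOn ℝ Set.univ (fun θ : E =>
      π * (∫ x, ((1 - α) * ℓ (inner ℝ θ (φ x) : ℝ)
          - α * ℓ (-(inner ℝ θ (φ x) : ℝ))) ∂μp)
        + α * ∫ x, ℓ (-(inner ℝ θ (φ x) : ℝ)) ∂μu) := by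
  -- rewrite the μp integrand using ℓ(-z) = ℓ(z) + z
  have hrw : ∀ θ : E,
      π * (∫ x, ((1 - α) * ℓ (inner ℝ θ (φ x) : ℝ)
          - α * ℓ (-(inner ℝ θ (φ x) : ℝ))) ∂μp)
        + α * ∫ x, ℓ (-(inner ℝ θ (φ x) : ℝ)) ∂μu
      = (π * (1 - 2 * α)) * ∫ x, ℓ (inner ℝ θ (φ x) : ℝ) ∂μp
        + (-(π * α)) * ∫ x, (inner ℝ θ (φ x) : ℝ) ∂μp
        + α * ∫ x, ℓ (-(inner ℝ θ (φ x) : ℝ)) ∂μu := by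
    intro θ
    have hi : ∫ x, ((1 - α) * ℓ (inner ℝ θ (φ x) : ℝ)
        - α * ℓ (-(inner ℝ θ (φ x) : ℝ))) ∂μp
        = (1 - 2 * α) * ∫ x, ℓ (inner ℝ θ (φ x) : ℝ) ∂μp
          - α * ∫ x, (inner ℝ θ (φ x) : ℝ) ∂μp := by
      rw [← integral_const_mul, ← integral_const_mul, ← integral_sub
        ((hint1p θ).const_mul _) ((hint3p θ).const_mul _)]
      congr 1
      ext x
      have h := hℓodd (inner ℝ θ (φ x) : ℝ)
      have : ℓ (-(inner ℝ θ (φ x) : ℝ)) = ℓ (inner ℝ θ (φ x) : ℝ) + (inner ℝ θ (φ x) : ℝ) := by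
        linarith
      rw [this]; ring
    rw [hi]; ring
  have heq : (fun θ : E =>
      π * (∫ x, ((1 - α) * ℓ (inner ℝ θ (φ x) : ℝ)
          - α * ℓ (-(inner ℝ θ (φ x) : ℝ))) ∂μp)
        + α * ∫ x, ℓ (-(inner ℝ θ (φ x) : ℝ)) ∂μu)
      = fun θ : E =>
        (π * (1 - 2 * α)) * ∫ x, ℓ (inner ℝ θ (φ x) : ℝ) ∂μp
        + (-(π * α)) * ∫ x, (inner ℝ θ (φ x) : ℝ) ∂μp
        + α * ∫ x, ℓ (-(inner ℝ θ (φ x) : ℝ)) ∂μu := funext hrw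
  rw [heq]
  have hconv1 : ConvexOn ℝ Set.univ
      (fun θ : E => ∫ x, ℓ (inner ℝ θ (φ x) : ℝ) ∂μp) :=
    aux_convexOn_integral φ ℓ hℓconv μp hint1p
  have hconv3 : ConvexOn ℝ Set.univ
      (fun θ : E => ∫ x, ℓ (inner ℝ θ ((-φ) x) : ℝ) ∂μu) := by
    refine aux_convexOn_integral (fun x => -φ x) ℓ hℓconv μu (fun θ => ?_)
    simpa [inner_neg_right] using hint2u θ
  have hconv3' : ConvexOn ℝ Set.univ
      (fun θ : E => ∫ x, ℓ (-(inner ℝ θ (φ x) : ℝ)) ∂μu) := by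
    convert hconv3 using 2 with θ
    simp [inner_neg_right]
  have hc1 : (0:ℝ) ≤ π * (1 - 2 * α) := by
    have := hπ.1; nlinarith
  have h1 := hconv1.smul hc1
  have h2 := aux_convexOn_linear φ (-(π * α)) μp hint3p
  have h3 := hconv3'.smul hα1.le
  have := (h1.add h2).add h3
  simpa [smul_eq_mul, Pi.add_def] using this
end

section
/- Let π, α ∈ (0,1). Then π + α − 2·α·π > 0, the quantity π' = (π − α·π)/(π + α − 2·α·π) satisfies 0 < π' < 1, and moreover (π − π·π')/(π' + π − 2·π·π') = α. -/
theorem stmt_12 (π α : ℝ) (hπ : π ∈ Set.Ioo (0:ℝ) 1) (hα : α ∈ Set.Ioo (0:ℝ) 1) :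
    0 < π + α - 2 * α * π ∧
      (0 < (π - α * π) / (π + α - 2 * α * π) ∧
        (π - α * π) / (π + α - 2 * α * π) < 1) ∧
      (π - π * ((π - α * π) / (π + α - 2 * α * π))) /
          ((π - α * π) / (π + α - 2 * α * π) + π
            - 2 * π * ((π - α * π) / (π + α - 2 * α * π))) = α := by
  obtain ⟨h1, h2⟩ := hπ
  obtain ⟨h3, h4⟩ := hα
  have hd : 0 < π + α - 2 * α * π := by nlinarith
  refine ⟨hd, ⟨?_, ?_⟩, ?_⟩
  · apply div_pos (by nlinarith) hd
  · rw [div_lt_one hd]; nlinarith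
  · have hπ1 : (0:ℝ) < 1 - π := by linarith
    have hne : π + α - π * α * 2 ≠ 0 := ne_of_gt (by linarith)
    have hA : π - π * ((π - α * π) / (π + α - 2 * α * π))
        = α * π * (1 - π) / (π + α - 2 * α * π) := by
      field_simp; ring
    have hB : (π - α * π) / (π + α - 2 * α * π) + π
        - 2 * π * ((π - α * π) / (π + α - 2 * α * π))
        = π * (1 - π) / (π + α - 2 * α * π) := by
      field_simp; ring
    rw [hA, hB]
    field_simp
    exact div_self (ne_of_gt (by linarith))
end

section
/- Let μ_p be a probability measure and μ_u a finite measure on a measurable space X, let π, π' ∈ (0,1), and set γ = π' − π. Let g : X → ℝ and ℓ : ℝ → ℝ satisfy ℓ(z) − ℓ(−z) = −z for all z ∈ ℝ, and assume x ↦ ℓ(g x), x ↦ ℓ(−g x), and x ↦ g x are integrable with respect to μ_p, and x ↦ ℓ(−g x) is integrable with respect to μ_u. Then ∫ (π'·ℓ(g x) − ((π − π·π')/(1−π))·ℓ(−g x)) dμ_p + ((1−π')/(1−π))·∫ ℓ(−g x) dμ_u = −π·∫ g x dμ_p + γ·∫ (ℓ(g x) + (π/(1−π))·ℓ(−g x))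 dμ_p + (1 − γ/(1−π))·∫ ℓ(−g x) dμ_u. -/
open MeasureTheory

theorem stmt_14 {X : Type*} [MeasurableSpace X]
    (μp μu : Measure X) [IsProbabilityMeasure μp] [IsFiniteMeasure μu]
    (π π' γ : ℝ) (hπ : π ∈ Set.Ioo (0:ℝ) 1) (hπ' : π' ∈ Set.Ioo (0:ℝ) 1)
    (hγ : γ = π' - π)
    (g : X → ℝ) (ℓ : ℝ → ℝ) (hℓodd : ∀ z : ℝ, ℓ z - ℓ (-z) = -z)
    (h1p : Integrable (fun x => ℓ (g x)) μp)
    (h2p : Integrable (fun x => ℓ (-g x)) μp)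
    (h3p : Integrable (fun x => g x) μp)
    (h2u : Integrable (fun x => ℓ (-g x)) μu) :
    (∫ x, (π' * ℓ (g x) - (π - π * π') / (1 - π) * ℓ (-g x)) ∂μp)
        + (1 - π') / (1 - π) * ∫ x, ℓ (-g x) ∂μu
      = -π * (∫ x, g x ∂μp)
        + γ * (∫ x, (ℓ (g x) + π / (1 - π) * ℓ (-g x)) ∂μp)
        + (1 - γ / (1 - π)) * ∫ x, ℓ (-g x) ∂μu := by
  obtain ⟨hπ0, hπ1⟩ := hπ
  have h1 : (1:ℝ) - π ≠ 0 := by linarith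
  have hA : (∫ x, ℓ (g x) ∂μp) = (∫ x, ℓ (-g x) ∂μp) - ∫ x, g x ∂μp := by
    rw [← integral_sub h2p h3p]
    refine integral_congr_ae (Filter.Eventually.of_forall fun x => ?_)
    show ℓ (g x) = ℓ (-g x) - g x
    have := hℓodd (g x)
    linarith
  rw [integral_sub (h1p.const_mul _) (h2p.const_mul _),
      integral_add h1p (h2p.const_mul _),
      integral_const_mul, integral_const_mul, integral_const_mul, hA]
  subst hγ
  field_simp
  ring
end
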